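/- For every n×n quaternionic matrix M, the complex determinant of ψ(M) is a nonnegative real number: det(ψ(M)) ∈ ℝ and det(ψ(M)) ≥ 0. -/
import Mathlib

open Quaternion Matrix

noncomputable section

/-- The complex number `A` in the entrywise decomposition `q = A + Bj` of a quaternion
(`ℂ = ℝ + ℝi ⊆ ℍ`). -/
def qPart1 (q : ℍ[ℝ]) : ℂ := ⟨q.re, q.imI⟩

/-- The complex number `B` in the entrywise decomposition `q = A + Bj` of a quaternion. -/
def qPart2 (q : ℍ[ℝ]) : ℂ := ⟨q.imJ, q.imK⟩

/-- The complex representation `ψ(M) = [[A, -conj B],[B, conj A]]` of a quaternionic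
`n×n` matrix `M = A + Bj` (a `2n×2n` complex matrix). -/
def psi {n : ℕ} (M : Matrix (Fin n) (Fin n) ℍ[ℝ]) :
    Matrix (Fin n ⊕ Fin n) (Fin n ⊕ Fin n) ℂ :=
  Matrix.fromBlocks (M.map qPart1) (-(M.map fun q => (starRingEnd ℂ) (qPart2 q)))
    (M.map qPart2) (M.map fun q => (starRingEnd ℂ) (qPart1 q))

/-- `λ` is a right eigenvalue of `M` if `Mv = vλ` for some nonzero column vector `v`. -/
def IsRightEigenvalue {n : ℕ} (M : Matrix (Fin n) (Fin n) ℍ[ℝ]) (l : ℍ[ℝ]) : Prop :=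
  ∃ v : Fin n → ℍ[ℝ], v ≠ 0 ∧ M.mulVec v = fun i => v i * l

open Complex

lemma qPart1_add (p q : ℍ[ℝ]) : qPart1 (p + q) = qPart1 p + qPart1 q := by
  simp [qPart1, Complex.ext_iff]
lemma qPart2_add (p q : ℍ[ℝ]) : qPart2 (p + q) = qPart2 p + qPart2 q := by
  simp [qPart2, Complex.ext_iff]
lemma qPart1_zero : qPart1 0 = 0 := by simp [qPart1, Complex.ext_iff]
lemma qPart2_zero : qPart2 0 = 0 := by simp [qPart2, Complex.ext_iff]
lemma qPart1_one : qPart1 1 = 1 := by simp [qPart1, Complex.ext_iff]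
lemma qPart2_one : qPart2 1 = 0 := by simp [qPart2, Complex.ext_iff]

lemma qPart1_mul (p q : ℍ[ℝ]) :
    qPart1 (p * q) = qPart1 p * qPart1 q - qPart2 p * (starRingEnd ℂ) (qPart2 q) := by
  simp [qPart1, qPart2, Complex.ext_iff, Quaternion.re_mul, Quaternion.imI_mul,
    Complex.mul_re, Complex.mul_im]
  constructor <;> ring

lemma qPart2_mul (p q : ℍ[ℝ]) :
    qPart2 (p * q) = qPart1 p * qPart2 q + qPart2 p * (starRingEnd ℂ) (qPart1 q) := by
  simp [qPart1, qPart2, Complex.ext_iff, Quaternion.imJ_mul, Quaternion.imK_mul,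
    Complex.mul_re, Complex.mul_im]
  constructor <;> ring

/-- bundled additive homs -/
def q1Hom : ℍ[ℝ] →+ ℂ := { toFun := qPart1, map_zero' := qPart1_zero, map_add' := qPart1_add }
def q2Hom : ℍ[ℝ] →+ ℂ := { toFun := qPart2, map_zero' := qPart2_zero, map_add' := qPart2_add }


lemma det_one_add_sep {m : Type*} [Fintype m] [DecidableEq m]
    (K : Matrix m m ℂ) (b : m → Prop) [DecidablePred b]
    (h : ∀ i j, K i j ≠ 0 → ¬ b i ∧ b j) : (1 + K).det = 1 := by
  have hBT : BlockTriangular (1 + K) (fun i => if b i then (1 : ℕ) else 0) := by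
    intro i j hij
    simp only at hij
    have hbi : b i := by by_contra hb; simp [hb] at hij
    have hbj : ¬ b j := by intro hb; simp [hbi, hb] at hij
    have hij' : i ≠ j := fun e => hbj (e ▸ hbi)
    have hK : K i j = 0 := by
      by_contra hne
      exact (h i j hne).1 hbi
    simp [Matrix.add_apply, Matrix.one_apply_ne hij', hK]
  rw [hBT.det]
  refine Finset.prod_eq_one fun a _ => ?_
  have : (1 + K).toSquareBlock (fun i => if b i then (1 : ℕ) else 0) a = 1 := by
    ext ⟨i, hi⟩ ⟨j, hj⟩
    have hK : K i j = 0 := by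
      by_contra hne
      obtain ⟨h1, h2⟩ := h i j hne
      rw [← hj] at hi
      simp [h1, h2] at hi
    by_cases hij : i = j
    · subst hij
      simp [Matrix.toSquareBlock_def, Matrix.one_apply, hK]
    · simp [Matrix.toSquareBlock_def, Matrix.one_apply, hK, hij,
        Subtype.ext_iff]
  rw [this, det_one]


namespace DetPsiAux

variable {n : ℕ}

def Psi (M : Matrix (Fin n) (Fin n) ℍ[ℝ]) :
    Matrix (Fin n ⊕ Fin n) (Fin n ⊕ Fin n) ℂ :=
  Matrix.fromBlocks (M.map qPart1) (M.map qPart2)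
    (-(M.map fun q => (starRingEnd ℂ) (qPart2 q))) (M.map fun q => (starRingEnd ℂ) (qPart1 q))


lemma Psi_one : Psi (1 : Matrix (Fin n) (Fin n) ℍ[ℝ]) = 1 := by
  unfold Psi
  rw [show (1 : Matrix (Fin n) (Fin n) ℍ[ℝ]).map qPart1 = 1 by
        ext i j; by_cases h : i = j <;> simp [Matrix.one_apply, h, qPart1_one, qPart1_zero],
      show (1 : Matrix (Fin n) (Fin n) ℍ[ℝ]).map qPart2 = 0 by
        ext i j; by_cases h : i = j <;> simp [Matrix.one_apply, h, qPart2_one, qPart2_zero],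
      show (1 : Matrix (Fin n) (Fin n) ℍ[ℝ]).map (fun q => (starRingEnd ℂ) (qPart2 q)) = 0 by
        ext i j; by_cases h : i = j <;> simp [Matrix.one_apply, h, qPart2_one, qPart2_zero],
      show (1 : Matrix (Fin n) (Fin n) ℍ[ℝ]).map (fun q => (starRingEnd ℂ) (qPart1 q)) = 1 by
        ext i j; by_cases h : i = j <;> simp [Matrix.one_apply, h, qPart1_one, qPart1_zero]]
  simp [Matrix.fromBlocks_one]


lemma Psi_mul (M N : Matrix (Fin n) (Fin n) ℍ[ℝ]) : Psi (M * N) = Psi M * Psi N := by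
  unfold Psi
  rw [Matrix.fromBlocks_multiply]
  have hA : (M * N).map qPart1
      = M.map qPart1 * N.map qPart1 + M.map qPart2 * -(N.map fun q => (starRingEnd ℂ) (qPart2 q)) := by
    ext i j
    simp only [Matrix.map_apply, Matrix.mul_apply, Matrix.add_apply, Matrix.neg_apply,
      mul_neg, ← Finset.sum_neg_distrib, ← Finset.sum_add_distrib]
    rw [show qPart1 = q1Hom from rfl, map_sum]
    refine Finset.sum_congr rfl fun k _ => ?_
    simp [q1Hom, qPart1_mul, sub_eq_add_neg]
  have hB : (M * N).map qPart2
      = M.map qPart1 * N.map qPart2 + M.map qPart2 * N.map fun q => (starRingEnd ℂ) (qPart1 q) := by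
    ext i j
    simp only [Matrix.map_apply, Matrix.mul_apply, Matrix.add_apply, ← Finset.sum_add_distrib]
    rw [show qPart2 = q2Hom from rfl, map_sum]
    refine Finset.sum_congr rfl fun k _ => ?_
    simp [q2Hom, qPart2_mul]
  have hC : (-((M * N).map fun q => (starRingEnd ℂ) (qPart2 q)))
      = (-(M.map fun q => (starRingEnd ℂ) (qPart2 q))) * N.map qPart1
        + (M.map fun q => (starRingEnd ℂ) (qPart1 q)) * -(N.map fun q => (starRingEnd ℂ) (qPart2 q)) := by
    ext i j
    simp only [Matrix.map_apply, Matrix.mul_apply, Matrix.add_apply, Matrix.neg_apply,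
      neg_mul, mul_neg, ← Finset.sum_neg_distrib, ← Finset.sum_add_distrib]
    rw [show qPart2 = q2Hom from rfl, map_sum, map_sum]
    rw [← Finset.sum_neg_distrib]
    refine Finset.sum_congr rfl fun k _ => ?_
    simp only [q2Hom, AddMonoidHom.coe_mk, ZeroHom.coe_mk, qPart2_mul]
    simp only [map_add, _root_.map_mul, Complex.conj_conj]
    ring
  have hD : ((M * N).map fun q => (starRingEnd ℂ) (qPart1 q))
      = (-(M.map fun q => (starRingEnd ℂ) (qPart2 q))) * N.map qPart2
        + (M.map fun q => (starRingEnd ℂ) (qPart1 q)) * N.map fun q => (starRingEnd ℂ) (qPart1 q) := by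
    ext i j
    simp only [Matrix.map_apply, Matrix.mul_apply, Matrix.add_apply, Matrix.neg_apply,
      neg_mul, ← Finset.sum_neg_distrib, ← Finset.sum_add_distrib]
    rw [show qPart1 = q1Hom from rfl, map_sum, map_sum]
    refine Finset.sum_congr rfl fun k _ => ?_
    simp only [q1Hom, AddMonoidHom.coe_mk, ZeroHom.coe_mk, qPart1_mul]
    simp only [map_sub, _root_.map_mul, Complex.conj_conj]
    ring
  rw [hA, hB, hC, hD]


def σe (n : ℕ) : ((Fin 1 ⊕ Fin 1) ⊕ (Fin n ⊕ Fin n)) ≃ (Fin (n+1) ⊕ Fin (n+1)) where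
  toFun := Sum.elim (Sum.elim (fun _ => Sum.inl 0) (fun _ => Sum.inr 0))
                    (Sum.elim (fun i => Sum.inl i.succ) (fun i => Sum.inr i.succ))
  invFun := Sum.elim (fun i => Fin.cases (Sum.inl (Sum.inl 0)) (fun k => Sum.inr (Sum.inl k)) i)
                     (fun i => Fin.cases (Sum.inl (Sum.inr 0)) (fun k => Sum.inr (Sum.inr k)) i)
  left_inv := by
    rintro ((x | x) | (x | x))
    · simp [Subsingleton.elim x 0]
    · simp [Subsingleton.elim x 0]
    · simp
    · simp
  right_inv := by
    rintro (x | x) <;> induction x using Fin.cases <;> simp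

def e2 : Fin 2 ≃ Fin 1 ⊕ Fin 1 where
  toFun i := if i = 0 then Sum.inl 0 else Sum.inr 0
  invFun := Sum.elim (fun _ => 0) (fun _ => 1)
  left_inv := by decide
  right_inv := by decide

lemma det_Psi_one_dim (q : ℍ[ℝ]) :
    (Psi (Matrix.of fun (_ : Fin 1) (_ : Fin 1) => q)).det = ((Quaternion.normSq q : ℝ) : ℂ) := by
  rw [← Matrix.det_submatrix_equiv_self e2, Matrix.det_fin_two]
  have h0 : e2 (0 : Fin 2) = Sum.inl (0 : Fin 1) := by decide
  have h1 : e2 (1 : Fin 2) = Sum.inr (0 : Fin 1) := by decide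
  simp only [Matrix.submatrix_apply, h0, h1, Psi, Matrix.fromBlocks_apply₁₁,
    Matrix.fromBlocks_apply₁₂, Matrix.fromBlocks_apply₂₁, Matrix.fromBlocks_apply₂₂,
    Matrix.map_apply, Matrix.neg_apply, Matrix.of_apply]
  simp [qPart1, qPart2, Complex.ext_iff, Complex.mul_re, Complex.mul_im,
    Quaternion.normSq_def', ← Complex.ofReal_pow, Complex.ofReal_re, Complex.ofReal_im]
  constructor <;> ring

lemma det_Psi_block (M : Matrix (Fin (n+1)) (Fin (n+1)) ℍ[ℝ])
    (h1 : ∀ i, i ≠ 0 → M i 0 = 0) (h2 : ∀ j, j ≠ 0 → M 0 j = 0) :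
    (Psi M).det
      = ((Quaternion.normSq (M 0 0) : ℝ) : ℂ) * (Psi (M.submatrix Fin.succ Fin.succ)).det := by
  have key : (Psi M).submatrix (σe n) (σe n)
      = Matrix.fromBlocks (Psi (Matrix.of fun (_ : Fin 1) (_ : Fin 1) => M 0 0)) 0 0
          (Psi (M.submatrix Fin.succ Fin.succ)) := by
    ext i j
    rcases i with (i | i) | (i | i) <;> rcases j with (j | j) | (j | j) <;>
      simp [σe, Psi, Matrix.submatrix_apply, h1, h2, qPart1_zero, qPart2_zero,
        Fin.succ_ne_zero, Matrix.fromBlocks_apply₁₁, Matrix.fromBlocks_apply₁₂,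
        Matrix.fromBlocks_apply₂₁, Matrix.fromBlocks_apply₂₂]
  rw [← Matrix.det_submatrix_equiv_self (σe n), key, Matrix.det_fromBlocks_zero₂₁,
    det_Psi_one_dim]


/-- Psi of `1 + X` is `1 +` blocks of `X`. -/
lemma Psi_one_add (X : Matrix (Fin n) (Fin n) ℍ[ℝ]) :
    Psi (1 + X) = 1 + Matrix.fromBlocks (X.map qPart1) (X.map qPart2)
      (-(X.map fun q => (starRingEnd ℂ) (qPart2 q)))
      (X.map fun q => (starRingEnd ℂ) (qPart1 q)) := by
  have e1 : (1 + X).map qPart1 = 1 + X.map qPart1 := by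
    ext i j; by_cases h : i = j <;>
      simp [Matrix.map_apply, Matrix.one_apply, h, qPart1_add, qPart1_one, qPart1_zero]
  have e2 : (1 + X).map qPart2 = X.map qPart2 := by
    ext i j; by_cases h : i = j <;>
      simp [Matrix.map_apply, Matrix.one_apply, h, qPart2_add, qPart2_one, qPart2_zero]
  have e3 : ((1 + X).map fun q => (starRingEnd ℂ) (qPart2 q))
      = X.map fun q => (starRingEnd ℂ) (qPart2 q) := by
    ext i j; by_cases h : i = j <;>
      simp [Matrix.map_apply, Matrix.one_apply, h, qPart2_add, qPart2_one, qPart2_zero]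
  have e4 : ((1 + X).map fun q => (starRingEnd ℂ) (qPart1 q))
      = 1 + X.map fun q => (starRingEnd ℂ) (qPart1 q) := by
    ext i j; by_cases h : i = j <;>
      simp [Matrix.map_apply, Matrix.one_apply, h, qPart1_add, qPart1_one, qPart1_zero]
  rw [Psi, e1, e2, e3, e4, ← Matrix.fromBlocks_one, Matrix.fromBlocks_add]
  simp

/-- separation lemma at the quaternionic level -/
lemma det_Psi_one_add_sep (X : Matrix (Fin n) (Fin n) ℍ[ℝ]) (b : Fin n → Prop)
    [DecidablePred b] (h : ∀ i j, X i j ≠ 0 → ¬ b i ∧ b j) :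
    (Psi (1 + X)).det = 1 := by
  classical
  rw [Psi_one_add]
  refine det_one_add_sep _ (Sum.elim b b) ?_
  have hz : ∀ i j, ¬ (X i j ≠ 0) → qPart1 (X i j) = 0 ∧ qPart2 (X i j) = 0 := by
    intro i j hij
    push_neg at hij
    simp [hij, qPart1_zero, qPart2_zero]
  rintro (i | i) (j | j) hij <;>
    simp only [Matrix.fromBlocks_apply₁₁, Matrix.fromBlocks_apply₁₂,
      Matrix.fromBlocks_apply₂₁, Matrix.fromBlocks_apply₂₂, Matrix.map_apply,
      Matrix.neg_apply, ne_eq, neg_eq_zero, Sum.elim_inl, Sum.elim_inr] at hij ⊢ <;>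
    · by_cases hX : X i j ≠ 0
      · exact h i j hX
      · obtain ⟨h1, h2⟩ := hz i j hX
        simp [h1, h2] at hij

lemma det_Psi_mul (M N : Matrix (Fin n) (Fin n) ℍ[ℝ]) :
    (Psi (M * N)).det = (Psi M).det * (Psi N).det := by
  rw [Psi_mul, Matrix.det_mul]

lemma single_col_mul (w : Fin n → ℍ[ℝ]) (j : Fin n) (M : Matrix (Fin n) (Fin n) ℍ[ℝ]) :
    (Matrix.of fun r k => if k = j then w r else 0) * M
      = Matrix.of fun r c => w r * M j c := by
  refine Matrix.ext fun r c => ?_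
  simp [Matrix.mul_apply, Finset.sum_ite_eq, ite_mul]

lemma mul_single_row (u : Fin n → ℍ[ℝ]) (j : Fin n) (M : Matrix (Fin n) (Fin n) ℍ[ℝ]) :
    M * (Matrix.of fun k c => if k = j then u c else 0)
      = Matrix.of fun r c => M r j * u c := by
  refine Matrix.ext fun r c => ?_
  simp [Matrix.mul_apply, Finset.sum_ite_eq, mul_ite]


lemma det_Psi_col_zero (M : Matrix (Fin (n+1)) (Fin (n+1)) ℍ[ℝ])
    (h : ∀ i, M i 0 = 0) : (Psi M).det = 0 := by
  refine Matrix.det_eq_zero_of_column_eq_zero (Sum.inl 0) ?_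
  rintro (i | i) <;> simp [Psi, h, qPart1_zero, qPart2_zero]

/-- pivot case of the induction -/
lemma pivot_case (M : Matrix (Fin (n+1)) (Fin (n+1)) ℍ[ℝ]) (hp : M 0 0 ≠ 0)
    (IH : ∀ N : Matrix (Fin n) (Fin n) ℍ[ℝ], ∃ x : ℝ, 0 ≤ x ∧ (Psi N).det = (x : ℂ)) :
    ∃ x : ℝ, 0 ≤ x ∧ (Psi M).det = (x : ℂ) := by
  classical
  set p := M 0 0 with hp0
  set w : Fin (n+1) → ℍ[ℝ] := fun r => if r = 0 then 0 else -(M r 0) * p⁻¹ with hw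
  set u : Fin (n+1) → ℍ[ℝ] := fun c => if c = 0 then 0 else -(p⁻¹ * M 0 c) with hu
  set X : Matrix (Fin (n+1)) (Fin (n+1)) ℍ[ℝ] :=
    Matrix.of fun r k => if k = 0 then w r else 0 with hX
  set Y : Matrix (Fin (n+1)) (Fin (n+1)) ℍ[ℝ] :=
    Matrix.of fun k c => if k = 0 then u c else 0 with hY
  set M₁ := (1 + X) * M * (1 + Y) with hM₁
  have hent : ∀ r c, M₁ r c = M r c + w r * M 0 c + M r 0 * u c + w r * M 0 0 * u c := by
    intro r c
    have : (1 + X) * M * (1 + Y) = M + X * M + (M * Y + X * M * Y) := by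
      noncomm_ring
    rw [hM₁, this]
    rw [single_col_mul, mul_single_row, mul_single_row]
    simp only [Matrix.add_apply, Matrix.of_apply]
    noncomm_ring
  have h1 : ∀ i, i ≠ 0 → M₁ i 0 = 0 := by
    intro i hi
    rw [hent]
    simp only [hw, hu, if_neg hi, if_pos rfl, mul_zero, add_zero]
    rw [← hp0]
    simp [mul_assoc, inv_mul_cancel₀ hp]
  have h2 : ∀ j, j ≠ 0 → M₁ 0 j = 0 := by
    intro j hj
    rw [hent]
    simp only [hw, hu, if_neg hj, if_pos rfl, zero_mul, add_zero, zero_add]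
    rw [← hp0]
    simp [← mul_assoc, mul_inv_cancel₀ hp]
  have hdet1 : (Psi (1 + X)).det = 1 := by
    refine det_Psi_one_add_sep X (fun t => t = 0) ?_
    intro i j hij
    rw [hX] at hij
    simp only [Matrix.of_apply] at hij
    by_cases hj : j = 0
    · subst hj
      refine ⟨?_, rfl⟩
      intro hi0
      rw [hw] at hij
      simp [hi0] at hij
    · simp [hj] at hij
  have hdet2 : (Psi (1 + Y)).det = 1 := by
    refine det_Psi_one_add_sep Y (fun t => t ≠ 0) ?_
    intro i j hij
    rw [hY] at hij
    simp only [Matrix.of_apply] at hij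
    by_cases hi : i = 0
    · subst hi
      refine ⟨by simp, ?_⟩
      intro hj0
      rw [hu] at hij
      simp [hj0] at hij
    · simp [hi] at hij
  have hdd : (Psi M₁).det = (Psi M).det := by
    rw [hM₁, det_Psi_mul, det_Psi_mul, hdet1, hdet2]
    ring
  have h00 : M₁ 0 0 = M 0 0 := by
    rw [hent]
    simp [hw, hu]
  obtain ⟨x, hx, hdx⟩ := IH (M₁.submatrix Fin.succ Fin.succ)
  refine ⟨Quaternion.normSq (M 0 0) * x, ?_, ?_⟩
  · exact mul_nonneg (Quaternion.normSq_nonneg) hx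
  · rw [← hdd, det_Psi_block M₁ h1 h2, h00, hdx]
    push_cast
    ring

theorem key : ∀ (n : ℕ) (M : Matrix (Fin n) (Fin n) ℍ[ℝ]),
    ∃ x : ℝ, 0 ≤ x ∧ (Psi M).det = (x : ℂ) := by
  intro n
  induction n with
  | zero =>
    intro M
    exact ⟨1, by norm_num, by simp [Matrix.det_isEmpty]⟩
  | succ n IH =>
    intro M
    by_cases hcol : ∀ i, M i 0 = 0
    · exact ⟨0, le_refl 0, by simp [det_Psi_col_zero M hcol]⟩
    push_neg at hcol
    obtain ⟨i, hi⟩ := hcol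
    by_cases hp : M 0 0 ≠ 0
    · exact pivot_case M hp IH
    push_neg at hp
    have hi0 : i ≠ 0 := fun h => hi (h ▸ hp)
    classical
    -- add row i to row 0
    set Z : Matrix (Fin (n+1)) (Fin (n+1)) ℍ[ℝ] :=
      Matrix.of fun r k => if k = i then (if r = 0 then (1:ℍ[ℝ]) else 0) else 0 with hZ
    set N := (1 + Z) * M with hN
    have hNent : ∀ r c, N r c = M r c + (if r = 0 then (1:ℍ[ℝ]) else 0) * M i c := by
      intro r c
      rw [hN, add_mul, one_mul, single_col_mul]
      simp [Matrix.add_apply]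
    have hN00 : N 0 0 ≠ 0 := by
      rw [hNent]
      simp [hp, hi]
    have hdZ : (Psi (1 + Z)).det = 1 := by
      refine det_Psi_one_add_sep Z (fun t => t = i) ?_
      intro a b hab
      rw [hZ] at hab
      simp only [Matrix.of_apply] at hab
      by_cases hb : b = i
      · subst hb
        refine ⟨?_, rfl⟩
        intro hai
        by_cases ha : a = 0
        · exact hi0 (ha ▸ hai).symm
        · simp [ha] at hab
      · simp [hb] at hab
    obtain ⟨x, hx, hdx⟩ := pivot_case N hN00 IH
    refine ⟨x, hx, ?_⟩
    rw [← hdx, hN, det_Psi_mul, hdZ, one_mul]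


end DetPsiAux

lemma psi_eq_transpose {n : ℕ} (M : Matrix (Fin n) (Fin n) ℍ[ℝ]) :
    psi M = (DetPsiAux.Psi Mᵀ)ᵀ := by
  ext i j
  rcases i with i | i <;> rcases j with j | j <;>
    simp [psi, DetPsiAux.Psi, Matrix.fromBlocks_apply₁₁, Matrix.fromBlocks_apply₁₂,
      Matrix.fromBlocks_apply₂₁, Matrix.fromBlocks_apply₂₂, Matrix.transpose_apply,
      Matrix.map_apply]

/-- For every quaternionic `n×n` matrix `M`, `det(ψ(M))` is a nonnegative real number. -/
theorem det_psi_nonneg_real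
    (n : ℕ) (M : Matrix (Fin n) (Fin n) ℍ[ℝ]) :
    ∃ x : ℝ, 0 ≤ x ∧ (psi M).det = (x : ℂ) := by
  obtain ⟨x, hx, hdet⟩ := DetPsiAux.key n Mᵀ
  refine ⟨x, hx, ?_⟩
  rw [psi_eq_transpose, Matrix.det_transpose, hdet]

end
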